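/- Equality of determinant expansions for distinct eigenvalues: if $\alpha_1,\dots,\alpha_n$ are pairwise distinct, then $\prod_{j=1}^n \Big( \sum_{i=1}^n (b_i - a_i)\, \alpha_j^{2n - 2i} \Big) = \sum_{\lambda \subset n \times (n-1)} m_{2\lambda}(\alpha_1,\dots,\alpha_n) \prod_{k=1}^n (b_{n-\lambda_k} - a_{n - \lambda_k})$, where $a_i, b_i$ are indeterminates, $b_\lambda$-conventions as before, and $m_{2\lambda}$ is the monomial symmetric polynomial with all parts doubled. -/

import Mathlib

/-- The monomial symmetric polynomial in `n` variables attached to the exponent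
vector `lam : Fin n → ℕ`: the sum of all distinct monomials obtained by permuting
the exponent vector. -/
def msym {R : Type*} [CommRing R] (n : ℕ) (lam : Fin n → ℕ) (α : Fin n → R) : R :=
  ∑ v ∈ Finset.image (fun σ : Equiv.Perm (Fin n) => lam ∘ σ) Finset.univ, ∏ i, α i ^ v i

/-- The `k`-th elementary symmetric polynomial in the `n` variables `α`. -/
def esym {R : Type*} [CommRing R] (n k : ℕ) (α : Fin n → R) : R :=
  ∑ s ∈ Finset.powersetCard k (Finset.univ : Finset (Fin n)), ∏ i ∈ s, α i

/-- The finset of partitions `λ = (λ₁ ≥ ⋯ ≥ λ_n)` with `n` parts (allowing zero parts),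
each part at most `B`; i.e. partitions whose Young diagram fits in an `n × B` box,
encoded as weakly decreasing functions `Fin n → ℕ`. -/
def partsBdd (n B : ℕ) : Finset (Fin n → ℕ) :=
  ((Finset.univ : Finset (Fin n → Fin (B + 1))).filter
      (fun f => ∀ i j : Fin n, i ≤ j → (f j : ℕ) ≤ (f i : ℕ))).image
    (fun f i => (f i : ℕ))

lemma mem_partsBdd {n B : ℕ} {lam : Fin n → ℕ} :
    lam ∈ partsBdd n B ↔ (∀ i, lam i ≤ B) ∧ ∀ i j : Fin n, i ≤ j → lam j ≤ lam i := by
  constructor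
  · intro h
    simp only [partsBdd, Finset.mem_image, Finset.mem_filter] at h
    obtain ⟨f, ⟨-, hf⟩, rfl⟩ := h
    exact ⟨fun i => Nat.lt_succ_iff.mp (f i).2, fun i j hij => hf i j hij⟩
  · rintro ⟨h1, h2⟩
    simp only [partsBdd, Finset.mem_image, Finset.mem_filter]
    exact ⟨fun i => ⟨lam i, Nat.lt_succ_iff.mpr (h1 i)⟩,
      ⟨Finset.mem_univ _, fun i j hij => h2 i j hij⟩, rfl⟩

lemma antitone_rearrange_eq {n : ℕ} {lam mu : Fin n → ℕ}
    (hl : ∀ i j : Fin n, i ≤ j → lam j ≤ lam i)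
    (hm : ∀ i j : Fin n, i ≤ j → mu j ≤ mu i)
    (σ : Equiv.Perm (Fin n)) (h : mu = lam ∘ σ) : lam = mu := by
  have hLmono : Monotone (lam ∘ (Fin.revPerm : Equiv.Perm (Fin n))) := by
    intro i j hij
    exact hl _ _ (Fin.rev_le_rev.mpr hij)
  have hMmono : Monotone (mu ∘ (Fin.revPerm : Equiv.Perm (Fin n))) := by
    intro i j hij
    exact hm _ _ (Fin.rev_le_rev.mpr hij)
  set π : Equiv.Perm (Fin n) := (Fin.revPerm.trans σ).trans Fin.revPerm with hπ
  have hM : mu ∘ (Fin.revPerm : Equiv.Perm (Fin n))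
      = (lam ∘ (Fin.revPerm : Equiv.Perm (Fin n))) ∘ π := by
    funext k
    simp [h, hπ, Function.comp]
  have h1 : (lam ∘ (Fin.revPerm : Equiv.Perm (Fin n))) ∘ π
      = (lam ∘ (Fin.revPerm : Equiv.Perm (Fin n))) ∘ ((1 : Equiv.Perm (Fin n)) : Fin n → Fin n) := by
    apply Tuple.unique_monotone
    · rw [← hM]; exact hMmono
    · simpa using hLmono
  have h2 : mu ∘ (Fin.revPerm : Equiv.Perm (Fin n))
      = lam ∘ (Fin.revPerm : Equiv.Perm (Fin n)) := by
    rw [hM, h1]; funext k; simp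
  funext k
  have := congrFun h2 (Fin.rev k)
  simpa using this.symm

/-- Expansion of the product of linear forms in the differences `bᵢ - aᵢ` with
coefficient vectors given by even powers of pairwise distinct `αⱼ`:
`∏ⱼ (∑_{i=1}^n (bᵢ - aᵢ) αⱼ^{2n-2i})
  = ∑_{λ ⊂ n × (n-1)} m_{2λ}(α) ∏ₖ (b_{n-λₖ} - a_{n-λₖ})`. -/
theorem gross_prasad_det_expansion {R : Type*} [CommRing R] (n : ℕ)
    (α : Fin n → R) (hα : Function.Injective α) (a b : ℕ → R) :
    ∏ j : Fin n, ∑ i ∈ Finset.Icc 1 n, (b i - a i) * α j ^ (2 * n - 2 * i)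
      = ∑ lam ∈ partsBdd n (n - 1),
          msym n (fun k => 2 * lam k) α *
            ∏ k : Fin n, (b (n - lam k) - a (n - lam k)) := by
  classical
  set c : ℕ → R := fun i => b i - a i with hc
  set T : Finset (Fin n → ℕ) := Fintype.piFinset (fun _ => Finset.range n) with hT
  set S : (Fin n → ℕ) → Finset (Fin n → ℕ) :=
    fun lam => Finset.image (fun σ : Equiv.Perm (Fin n) => lam ∘ σ) Finset.univ with hS
  -- Step 1: expand the LHS as a sum over `T`
  have step1 : ∏ j : Fin n, ∑ i ∈ Finset.Icc 1 n, c i * α j ^ (2 * n - 2 * i)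
      = ∑ f ∈ T, (∏ i, α i ^ (2 * f i)) * ∏ k : Fin n, c (n - f k) := by
    rw [Finset.prod_univ_sum]
    apply Finset.sum_bij' (fun g _ => fun j => n - g j) (fun f _ => fun j => n - f j)
    · intro g hg
      simp only [Fintype.mem_piFinset, Finset.mem_range, hT]
      intro j
      have := Finset.mem_Icc.mp ((Fintype.mem_piFinset.mp hg) j)
      omega
    · intro f hf
      simp only [Fintype.mem_piFinset, Finset.mem_range, hT] at hf ⊢
      intro j
      have := hf j
      exact Finset.mem_Icc.mpr (by omega)
    · intro g hg
      funext j
      have := Finset.mem_Icc.mp ((Fintype.mem_piFinset.mp hg) j)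
      simp only []
      omega
    · intro f hf
      funext j
      have := Finset.mem_range.mp ((Fintype.mem_piFinset.mp hf) j)
      simp only []
      omega
    · intro g hg
      rw [← Finset.prod_mul_distrib]
      apply Finset.prod_congr rfl
      intro j _
      have := Finset.mem_Icc.mp ((Fintype.mem_piFinset.mp hg) j)
      have h1 : n - (n - g j) = g j := by omega
      have h2 : 2 * (n - g j) = 2 * n - 2 * g j := by omega
      rw [h1, h2, mul_comm]
  -- Step 2: rewrite the RHS as a double sum
  have step2 : ∀ lam : Fin n → ℕ,
      msym n (fun k => 2 * lam k) α * ∏ k : Fin n, c (n - lam k)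
      = ∑ w ∈ S lam, (∏ i, α i ^ (2 * w i)) * ∏ k : Fin n, c (n - w k) := by
    intro lam
    have himg : Finset.image (fun σ : Equiv.Perm (Fin n) => (fun k => 2 * lam k) ∘ σ)
        Finset.univ = Finset.image (fun w : Fin n → ℕ => fun i => 2 * w i) (S lam) := by
      rw [hS, Finset.image_image]
      rfl
    have hinj : ∀ w1 ∈ S lam, ∀ w2 ∈ S lam,
        (fun i => 2 * w1 i) = (fun i => 2 * w2 i) → w1 = w2 := by
      intro w1 _ w2 _ h
      funext i
      have := congrFun h i
      omega
    rw [msym, himg, Finset.sum_image hinj, Finset.sum_mul]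
    apply Finset.sum_congr rfl
    intro w hw
    congr 1
    obtain ⟨σ, _, rfl⟩ := Finset.mem_image.mp hw
    exact (Equiv.prod_comp σ (fun k => c (n - lam k))).symm
  -- Step 3: `T` is the disjoint union of the `S lam`
  have hdisj : (↑(partsBdd n (n - 1)) : Set (Fin n → ℕ)).PairwiseDisjoint S := by
    intro lam hlam mu hmu hne
    simp only [Function.onFun]
    rw [Finset.disjoint_left]
    intro w hw1 hw2
    apply hne
    obtain ⟨σ, _, hσ⟩ := Finset.mem_image.mp hw1
    obtain ⟨τ, _, hτ⟩ := Finset.mem_image.mp hw2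
    have hlam' := (mem_partsBdd.mp (by exact_mod_cast hlam)).2
    have hmu' := (mem_partsBdd.mp (by exact_mod_cast hmu)).2
    apply antitone_rearrange_eq hlam' hmu' (τ⁻¹.trans σ)
    funext k
    have h1 := congrFun hτ (τ⁻¹ k)
    have h2 := congrFun hσ (τ⁻¹ k)
    simp only [Function.comp, (by simp : τ (τ⁻¹ k) = k)] at h1 h2
    show mu k = lam (σ (τ⁻¹ k))
    rw [h1, h2]
  have hcover : T = (partsBdd n (n - 1)).biUnion S := by
    ext f
    simp only [Finset.mem_biUnion, Fintype.mem_piFinset, Finset.mem_range, hT]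
    constructor
    · intro hf
      set π : Equiv.Perm (Fin n) := (Fin.revPerm.trans (Tuple.sort f)) with hπ
      refine ⟨f ∘ π, ?_, ?_⟩
      · rw [mem_partsBdd]
        constructor
        · intro i
          have := hf (π i)
          simp only [Function.comp]
          omega
        · intro i j hij
          have hmono := Tuple.monotone_sort f
          have : (f ∘ Tuple.sort f) (Fin.rev j) ≤ (f ∘ Tuple.sort f) (Fin.rev i) :=
            hmono (Fin.rev_le_rev.mpr hij)
          simpa [hπ] using this
      · rw [hS, Finset.mem_image]
        refine ⟨π⁻¹, Finset.mem_univ _, ?_⟩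
        funext k
        simp [Function.comp]
    · rintro ⟨lam, hlam, hf⟩
      obtain ⟨σ, _, rfl⟩ := Finset.mem_image.mp hf
      intro j
      have := (mem_partsBdd.mp hlam).1 (σ j)
      have : lam (σ j) ≤ n - 1 := this
      have hpos : 0 < n := j.pos
      simp only [Function.comp]
      omega
  -- put everything together
  show ∏ j : Fin n, ∑ i ∈ Finset.Icc 1 n, c i * α j ^ (2 * n - 2 * i)
      = ∑ lam ∈ partsBdd n (n - 1),
          msym n (fun k => 2 * lam k) α * ∏ k : Fin n, c (n - lam k)
  calc ∏ j : Fin n, ∑ i ∈ Finset.Icc 1 n, c i * α j ^ (2 * n - 2 * i)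
      = ∑ f ∈ T, (∏ i, α i ^ (2 * f i)) * ∏ k : Fin n, c (n - f k) := step1
    _ = ∑ lam ∈ partsBdd n (n - 1), ∑ w ∈ S lam,
          (∏ i, α i ^ (2 * w i)) * ∏ k : Fin n, c (n - w k) := by
        rw [hcover, Finset.sum_biUnion hdisj]
    _ = ∑ lam ∈ partsBdd n (n - 1),
          msym n (fun k => 2 * lam k) α * ∏ k : Fin n, c (n - lam k) := by
        apply Finset.sum_congr rfl
        intro lam _
        exact (step2 lam).symm
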